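/- For n ≥ 1, the alternating sum ∑_{k=0}^{n-1} (-q)^k [n-k]_q! · Stir_q(n, n-k) equals 1, where [m]_q = 1 + q + ... + q^{m-1}, [m]_q! = [1]_q [2]_q ⋯ [m]_q, and Stir_q(n,k) are the q-Stirling numbers of the second kind. -/

import Mathlib

open Polynomial

/-- The `q`-integer `[k]_q = 1 + q + ⋯ + q^{k-1}`. -/
noncomputable def qint (k : ℕ) : Polynomial ℚ := ∑ i ∈ Finset.range k, X ^ i

/-- The `q`-factorial `[m]_q! = [1]_q [2]_q ⋯ [m]_q`. -/
noncomputable def qfact (m : ℕ) : Polynomial ℚ := ∏ i ∈ Finset.range m, qint (i + 1)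

/-- The `q`-Stirling numbers of the second kind, satisfying
`Stir_q(n,k) = Stir_q(n-1,k-1) + [k]_q Stir_q(n-1,k)` with `Stir_q(1,k) = δ_{k,1}`. -/
noncomputable def qStirling : ℕ → ℕ → Polynomial ℚ
  | 0, k => if k = 0 then 1 else 0
  | n + 1, k => (if k = 0 then 0 else qStirling n (k - 1)) + qint k * qStirling n k

lemma qint_zero' : qint 0 = 0 := by simp [qint]

lemma qint_succ' (k : ℕ) : qint (k + 1) = 1 + X * qint k := by
  simp only [qint, Finset.sum_range_succ', pow_zero, pow_succ, Finset.mul_sum]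
  ring_nf

lemma qfact_succ' (m : ℕ) : qfact (m + 1) = qfact m * qint (m + 1) := by
  simp [qfact, Finset.prod_range_succ]

lemma qStirling_zero_right (n : ℕ) (hn : 1 ≤ n) : qStirling n 0 = 0 := by
  obtain ⟨m, rfl⟩ := Nat.exists_eq_add_of_le hn
  induction m with
  | zero => simp [qStirling, qint_zero']
  | succ m ih =>
    rw [show 1 + (m + 1) = (1 + m) + 1 by omega]
    simp [qStirling, qint_zero', ih (by omega)]

lemma qStirling_of_lt (n : ℕ) : ∀ k, n < k → qStirling n k = 0 := by
  induction n with
  | zero => intro k hk; simp [qStirling]; omega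
  | succ n ih =>
    intro k hk
    have hk0 : k ≠ 0 := by omega
    simp only [qStirling, if_neg hk0, ih (k - 1) (by omega), ih k (by omega), mul_zero, add_zero]

lemma key (n : ℕ) (hn : 1 ≤ n) :
    ∑ j ∈ Finset.range n, (-X : Polynomial ℚ) ^ (n - 1 - j) *
      (qfact (j + 1) * qStirling n (j + 1)) = 1 := by
  induction n, hn using Nat.le_induction with
  | base => simp [qfact, qint, qStirling]
  | succ n hn ih =>
    have hsplit : ∑ j ∈ Finset.range (n + 1), (-X : Polynomial ℚ) ^ (n + 1 - 1 - j) *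
        (qfact (j + 1) * qStirling (n + 1) (j + 1))
        = (∑ j ∈ Finset.range (n + 1), (-X) ^ (n - j) * (qfact (j + 1) * qStirling n j))
          + ∑ j ∈ Finset.range (n + 1),
            (-X) ^ (n - j) * (qfact (j + 1) * (qint (j + 1) * qStirling n (j + 1))) := by
      rw [← Finset.sum_add_distrib]
      apply Finset.sum_congr rfl
      intro j _
      have : qStirling (n + 1) (j + 1) = qStirling n j + qint (j + 1) * qStirling n (j + 1) := by
        simp [qStirling]
      rw [show n + 1 - 1 - j = n - j from rfl, this]
      ring
    rw [hsplit, Finset.sum_range_succ', Finset.sum_range_succ,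
      qStirling_zero_right n hn, qStirling_of_lt n (n + 1) (by omega)]
    simp only [mul_zero, add_zero, zero_mul]
    rw [← ih, ← Finset.sum_add_distrib]
    apply Finset.sum_congr rfl
    intro j hj
    have hjn : j < n := Finset.mem_range.mp hj
    have h1 : n - (j + 1) = n - 1 - j := by omega
    have h2 : n - j = (n - 1 - j) + 1 := by omega
    rw [h1, h2, qfact_succ', qint_succ' (j + 1)]
    ring

theorem qStirling_alternating_sum (n : ℕ) (hn : 1 ≤ n) :
    ∑ k ∈ Finset.range n, (-X) ^ k * qfact (n - k) * qStirling n (n - k) = 1 := by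
  have h := key n hn
  rw [← Finset.sum_range_reflect] at h
  rw [← h]
  apply Finset.sum_congr rfl
  intro k hk
  have hkn : k < n := Finset.mem_range.mp hk
  have e1 : n - 1 - (n - 1 - k) = k := by omega
  have e2 : n - 1 - k + 1 = n - k := by omega
  rw [e1, e2]
  ring
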